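/- Let a be a positive definite Hermitian 2×2 complex matrix with A = det a > 0 and 𝔸 = A + (Im a₁₂)². Fix y = (y₁, y₂) ∈ ℝ² with y ≠ 0 and μ ∈ ℝ, and write Q_w = Q(x₁ + iy₁, x₂ + iy₂) and ϱ = √((A/𝔸)Qℝ(y) + Aμ²). Then both of the following integrals over x = (x₁, x₂) ∈ ℝ² converge and: ∫_{ℝ²} [ μ/( Q_w·(Q_w+Aμ²)^{3/2} ) + 2μ/( Q_w²·(Q_w+Aμ²)^{1/2} ) − 2/( √A·Q_w² ) ] dx = −2π/( √A·√𝔸·ϱ·(ϱ + √A·μ) ), and ∫_{ℝ²} [ μ/( Q_w·(Q_w+Aμ²)^{3/2} ) + 2μ/( Q_w²·(Q_w+Aμ²)^{1/2} ) + 2/( √A·Q_w² ) ] dx = 2π/( √A·√𝔸·ϱ·(ϱ − √A·μ) ). (These are the closed forms of the integrals I_{p3} and I_{p4} used in constructing the holomorphic differentials on the negative vertex; note ϱ > √A·|μ| since y ≠ 0.) -/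

import Mathlib

open MeasureTheory Set Filter Topology

/-- The Hermitian form `Q(w) = a₁₁|w₁|² + a₂₂|w₂|² + 2Re(a₁₂ w₁ conj(w₂))`. -/
noncomputable def Qh (a11 a22 : ℝ) (a12 w1 w2 : ℂ) : ℝ :=
  a11 * Complex.normSq w1 + a22 * Complex.normSq w2 + 2 * (a12 * w1 * (starRingEnd ℂ) w2).re

/-- The real quadratic form `Qℝ(y) = a₁₁y₁² + 2Re(a₁₂)y₁y₂ + a₂₂y₂²`. -/
noncomputable def QR (a11 a22 : ℝ) (a12 : ℂ) (y1 y2 : ℝ) : ℝ :=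
  a11 * y1 ^ 2 + 2 * a12.re * y1 * y2 + a22 * y2 ^ 2

/-- `Q_w` evaluated at `w = (x₁+iy₁, x₂+iy₂)`. -/
noncomputable def Qw (a11 a22 : ℝ) (a12 : ℂ) (y1 y2 : ℝ) (x : ℝ × ℝ) : ℝ :=
  Qh a11 a22 a12 ((x.1 : ℂ) + (y1 : ℂ) * Complex.I) ((x.2 : ℂ) + (y2 : ℂ) * Complex.I)

/-- The distance `ϱ = √((A/𝔸)Qℝ(y₁,y₂) + Aμ²)` with `A = det a`, `𝔸 = A + (Im a₁₂)²`. -/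
noncomputable def rhoH (a11 a22 : ℝ) (a12 : ℂ) (y1 y2 μ : ℝ) : ℝ :=
  Real.sqrt (((a11 * a22 - Complex.normSq a12) /
      (a11 * a22 - Complex.normSq a12 + a12.im ^ 2)) * QR a11 a22 a12 y1 y2
    + (a11 * a22 - Complex.normSq a12) * μ ^ 2)

lemma radial_integral (g H : ℝ → ℝ) (m C : ℝ) (hm : 0 < m) (hC : 0 ≤ C)
    (hg : ContinuousOn g (Ici m))
    (hH : ∀ s ∈ Ici m, HasDerivAt H (g s) s)
    (hH0 : Tendsto H atTop (𝓝 0))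
    (hbound : ∀ s ∈ Ici m, |g s| ≤ C / s ^ 2) :
    Integrable (fun z : ℝ × ℝ => g (z.1 ^ 2 + z.2 ^ 2 + m)) ∧
      ∫ z : ℝ × ℝ, g (z.1 ^ 2 + z.2 ^ 2 + m) = -Real.pi * H m := by
  have hmem : ∀ z : ℝ × ℝ, z.1 ^ 2 + z.2 ^ 2 + m ∈ Ici m := by
    intro z
    simp only [mem_Ici]
    nlinarith [sq_nonneg z.1, sq_nonneg z.2]
  have hcont2 : Continuous fun z : ℝ × ℝ => g (z.1 ^ 2 + z.2 ^ 2 + m) :=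
    hg.comp_continuous (by continuity) hmem
  constructor
  · -- integrability
    set k := min m 1 with hk
    have hk0 : 0 < k := lt_min hm one_pos
    have hk1 : k ≤ 1 := min_le_right _ _
    have hkm : k ≤ m := min_le_left _ _
    have key : ∀ z : ℝ × ℝ, ‖g (z.1 ^ 2 + z.2 ^ 2 + m)‖ ≤
        (4 * C / k ^ 2) * (1 + ‖z‖) ^ (-(4:ℝ)) := by
      intro z
      have ht0 : (0:ℝ) ≤ ‖z‖ := norm_nonneg _
      have ht1 : ‖z.1‖ ≤ ‖z‖ := norm_fst_le z
      have ht2 : ‖z.2‖ ≤ ‖z‖ := norm_snd_le z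
      have htsq : ‖z‖ ^ 2 ≤ z.1 ^ 2 + z.2 ^ 2 := by
        have : ‖z‖ = max ‖z.1‖ ‖z.2‖ := rfl
        rcases max_cases ‖z.1‖ ‖z.2‖ with ⟨h1, _⟩ | ⟨h1, _⟩ <;> rw [this, h1] <;>
          simp only [Real.norm_eq_abs, sq_abs] <;>
          nlinarith [sq_abs z.1, sq_abs z.2, sq_nonneg z.1, sq_nonneg z.2]
      have hsl : k / 2 * (1 + ‖z‖) ^ 2 ≤ z.1 ^ 2 + z.2 ^ 2 + m := by
        nlinarith [mul_nonneg hk0.le (sq_nonneg (1 - ‖z‖)),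
          mul_le_mul_of_nonneg_right hk1 (sq_nonneg ‖z‖)]
      have hpos : (0:ℝ) < k / 2 * (1 + ‖z‖) ^ 2 := by positivity
      have hb := hbound _ (hmem z)
      have h4 : (k / 2 * (1 + ‖z‖) ^ 2) ^ 2 ≤ (z.1 ^ 2 + z.2 ^ 2 + m) ^ 2 := by
        apply pow_le_pow_left₀ hpos.le hsl
      have h5 : C / (z.1 ^ 2 + z.2 ^ 2 + m) ^ 2 ≤ C / (k / 2 * (1 + ‖z‖) ^ 2) ^ 2 := by
        gcongr
      have h6 : C / (k / 2 * (1 + ‖z‖) ^ 2) ^ 2 = (4 * C / k ^ 2) * (1 + ‖z‖) ^ (-(4:ℝ)) := by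
        rw [show ((1:ℝ) + ‖z‖) ^ (-(4:ℝ)) = ((1 + ‖z‖) ^ (4:ℕ))⁻¹ by
          rw [Real.rpow_neg (by positivity), ← Real.rpow_natCast (1 + ‖z‖) 4]; norm_num]
        field_simp
        ring
      calc ‖g (z.1 ^ 2 + z.2 ^ 2 + m)‖ = |g (z.1 ^ 2 + z.2 ^ 2 + m)| := rfl
        _ ≤ C / (z.1 ^ 2 + z.2 ^ 2 + m) ^ 2 := hb
        _ ≤ C / (k / 2 * (1 + ‖z‖) ^ 2) ^ 2 := h5
        _ = _ := h6
    have hintb : Integrable (fun z : ℝ × ℝ => (4 * C / k ^ 2) * (1 + ‖z‖) ^ (-(4:ℝ))) := by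
      apply Integrable.const_mul
      apply integrable_one_add_norm (E := ℝ × ℝ)
      norm_num
    exact hintb.mono' hcont2.aestronglyMeasurable (ae_of_all _ key)
  · -- value via polar coordinates
    have hFTC : ∫ r in Ioi (0:ℝ), r * g (r ^ 2 + m) = 0 - (1/2) * H ((0:ℝ) ^ 2 + m) := by
      have hgc : Continuous fun r : ℝ => g (r ^ 2 + m) :=
        hg.comp_continuous (by continuity) (fun r => by simp only [mem_Ici]; nlinarith [sq_nonneg r])
      have hc : Continuous fun r : ℝ => r * g (r ^ 2 + m) := continuous_id.mul hgc
      have hderiv : ∀ r ∈ Ici (0:ℝ), HasDerivAt (fun r : ℝ => (1/2) * H (r ^ 2 + m))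
          (r * g (r ^ 2 + m)) r := by
        intro r _
        have h2 : HasDerivAt (fun r : ℝ => r ^ 2 + m) (2 * r) r := by
          simpa using (hasDerivAt_pow 2 r).add_const m
        have h3 := ((hH _ (by simp only [mem_Ici]; nlinarith [sq_nonneg r])).comp r h2).const_mul
          (1/2 : ℝ)
        refine h3.congr_deriv ?_
        ring
      have hint : IntegrableOn (fun r : ℝ => r * g (r ^ 2 + m)) (Ioi (0:ℝ)) := by
        rw [← Set.Ioc_union_Ioi_eq_Ioi (zero_le_one (α := ℝ))]
        apply IntegrableOn.union
        · exact hc.integrableOn_Ioc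
        · apply Integrable.mono'
            ((integrableOn_Ioi_rpow_of_lt (by norm_num : (-3:ℝ) < -1) one_pos).const_mul C)
          · exact hc.aestronglyMeasurable.restrict
          · filter_upwards [ae_restrict_mem measurableSet_Ioi] with r hr
            have hr1 : (1:ℝ) < r := hr
            have hr0 : (0:ℝ) < r := by linarith
            have hb := hbound _ (show r ^ 2 + m ∈ Ici m by simp only [mem_Ici]; nlinarith)
            have hrp : r ^ (-3:ℝ) = (r ^ (3:ℕ))⁻¹ := by
              rw [Real.rpow_neg hr0.le, ← Real.rpow_natCast r 3]; norm_num
            rw [Real.norm_eq_abs, abs_mul, abs_of_pos hr0, hrp]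
            have h1 : |g (r ^ 2 + m)| ≤ C / (r ^ 2) ^ 2 := by
              refine hb.trans ?_
              gcongr
              nlinarith
            calc r * |g (r ^ 2 + m)| ≤ r * (C / (r ^ 2) ^ 2) := by
                  exact mul_le_mul_of_nonneg_left h1 hr0.le
              _ = C * (r ^ (3:ℕ))⁻¹ := by field_simp
      have hT : Tendsto (fun r : ℝ => (1/2) * H (r ^ 2 + m)) atTop (𝓝 0) := by
        have h1 : Tendsto (fun r : ℝ => r ^ 2 + m) atTop atTop :=
          tendsto_atTop_add_const_right _ m (tendsto_pow_atTop two_ne_zero)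
        have := (hH0.comp h1).const_mul (1/2 : ℝ)
        simpa using this
      exact integral_Ioi_of_hasDerivAt_of_tendsto' hderiv hint hT
    have hpolar := integral_comp_polarCoord_symm (fun z : ℝ × ℝ => g (z.1 ^ 2 + z.2 ^ 2 + m))
    rw [← hpolar]
    have hcongr : ∫ p in polarCoord.target, p.1 •
        (fun z : ℝ × ℝ => g (z.1 ^ 2 + z.2 ^ 2 + m)) (polarCoord.symm p)
        = ∫ p in polarCoord.target,
            (fun r : ℝ => r * g (r ^ 2 + m)) p.1 * (fun _ : ℝ => (1:ℝ)) p.2 := by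
      apply setIntegral_congr_fun polarCoord.open_target.measurableSet
      intro p _
      simp only [polarCoord_symm_apply, smul_eq_mul, mul_one]
      congr 2
      nlinarith [Real.sin_sq_add_cos_sq p.2]
    rw [hcongr, polarCoord_target, Measure.volume_eq_prod,
      setIntegral_prod_mul (fun r : ℝ => r * g (r ^ 2 + m)) (fun _ : ℝ => (1:ℝ)), hFTC]
    have : ∫ θ in Ioo (-Real.pi) Real.pi, (1:ℝ) = 2 * Real.pi := by
      simp [Real.volume_Ioo]
      rw [max_eq_left (by positivity)]
      ring
    rw [this]
    ring_nf

set_option maxHeartbeats 4000000 in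
lemma master (a11 a22 : ℝ) (a12 : ℂ) (ha11 : 0 < a11) (ha22 : 0 < a22)
    (hA : 0 < a11 * a22 - Complex.normSq a12) (y1 y2 : ℝ) (hy : ¬(y1 = 0 ∧ y2 = 0))
    (G H : ℝ → ℝ) (C : ℝ) (hC : 0 ≤ C) (m : ℝ)
    (hm_def : m = (a11 * a22 - Complex.normSq a12) * QR a11 a22 a12 y1 y2 /
      (a11 * a22 - Complex.normSq a12 + a12.im ^ 2))
    (hG : ContinuousOn G (Set.Ici m))
    (hH : ∀ s ∈ Set.Ici m, HasDerivAt H (G s) s)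
    (hH0 : Filter.Tendsto H Filter.atTop (nhds 0))
    (hbound : ∀ s ∈ Set.Ici m, |G s| ≤ C / s ^ 2) :
    Integrable (fun x : ℝ × ℝ => G (Qw a11 a22 a12 y1 y2 x)) ∧
      ∫ x : ℝ × ℝ, G (Qw a11 a22 a12 y1 y2 x)
        = -(Real.pi / Real.sqrt (a11 * a22 - Complex.normSq a12 + a12.im ^ 2)) * H m := by
  have hns : Complex.normSq a12 = a12.re ^ 2 + a12.im ^ 2 := by
    rw [Complex.normSq_apply]; ring
  set q := a12.re with hq
  set t := a12.im with ht
  set D := a11 * a22 - Complex.normSq a12 + t ^ 2 with hDdef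
  have hD' : D = a11 * a22 - q ^ 2 := by rw [hDdef, hns]; ring
  have hDpos : 0 < D := by rw [hDdef]; nlinarith [sq_nonneg t]
  have hDq : 0 < a11 * a22 - q ^ 2 := by rw [← hD']; exact hDpos
  set sp := Real.sqrt a11 with hspdef
  set sD := Real.sqrt D with hsDdef
  have hsp : sp ^ 2 = a11 := Real.sq_sqrt ha11.le
  have hsppos : 0 < sp := Real.sqrt_pos.2 ha11
  have hsD : sD ^ 2 = D := Real.sq_sqrt hDpos.le
  have hsDpos : 0 < sD := Real.sqrt_pos.2 hDpos
  have hQRy : 0 < QR a11 a22 a12 y1 y2 := by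
    by_cases hy2 : y2 = 0
    · have hy1 : y1 ≠ 0 := fun h => hy ⟨h, hy2⟩
      simp only [QR, hy2]
      have : (0:ℝ) < a11 * y1 ^ 2 := by positivity
      nlinarith
    · have hy2sq : 0 < y2 ^ 2 := by positivity
      have h1 : 0 < a11 * QR a11 a22 a12 y1 y2 := by
        simp only [QR]
        nlinarith [sq_nonneg (a11 * y1 + q * y2), mul_pos hDq hy2sq]
      by_contra h
      push_neg at h
      nlinarith [mul_nonneg ha11.le (neg_nonneg.2 h)]
  have hm : 0 < m := by
    rw [hm_def]
    exact div_pos (mul_pos hA hQRy) hDpos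
  set u1 := t / D * (a22 * y2 + q * y1) with hu1
  set u2 := -(t / D) * (q * y2 + a11 * y1) with hu2
  set L := LinearMap.toContinuousLinearMap
    (Matrix.toLin (Module.Basis.finTwoProd ℝ) (Module.Basis.finTwoProd ℝ)
      !![1/sp, -q/(sp*sD); 0, sp/sD]) with hL
  have hLapp : ∀ z : ℝ × ℝ, L z = (z.1/sp - q*z.2/(sp*sD), sp*z.2/sD) := by
    intro z
    rw [hL, Matrix.toLin_finTwoProd_toContinuousLinearMap]
    simp only [ContinuousLinearMap.prod_apply, ContinuousLinearMap.add_apply,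
      ContinuousLinearMap.coe_smul', Pi.smul_apply, ContinuousLinearMap.coe_fst',
      ContinuousLinearMap.coe_snd', smul_eq_mul, Prod.mk.injEq]
    constructor <;> ring
  set φ := fun z : ℝ × ℝ => L z + (-u1, -u2) with hφ
  have hφapp : ∀ z : ℝ × ℝ, φ z = (z.1/sp - q*z.2/(sp*sD) - u1, sp*z.2/sD - u2) := by
    intro z
    rw [hφ]
    simp only [hLapp, Prod.mk_add_mk, Prod.mk.injEq]
    constructor <;> ring
  have halg : ∀ z : ℝ × ℝ, Qw a11 a22 a12 y1 y2 (φ z) = z.1^2 + z.2^2 + m := by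
    intro z
    rw [hφapp, hm_def]
    have ha22' : a22 = (sD^2 + q^2)/sp^2 := by
      rw [hsD, hsp, hD']; field_simp; ring
    simp only [Qw, Qh, QR, Complex.normSq_apply, Complex.add_re, Complex.add_im,
      Complex.mul_re, Complex.mul_im, Complex.ofReal_re, Complex.ofReal_im,
      Complex.I_re, Complex.I_im, Complex.conj_re, Complex.conj_im, ← hq, ← ht]
    rw [hu1, hu2, ← hsD, ha22', show a11 = sp^2 from hsp.symm]
    have hsp0 : sp ≠ 0 := hsppos.ne'
    have hsD0 : sD ≠ 0 := hsDpos.ne'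
    field_simp
    ring
  have hdet : L.det = 1/sD := by
    rw [hL]
    simp only [LinearMap.det_toContinuousLinearMap, LinearMap.det_toLin, Matrix.det_fin_two_of]
    field_simp
    ring
  have hder : ∀ x ∈ (Set.univ : Set (ℝ × ℝ)), HasFDerivWithinAt φ L Set.univ x := fun x _ =>
    (L.hasFDerivAt.add_const _).hasFDerivWithinAt
  have hinj : Set.InjOn φ Set.univ := by
    intro z _ z' _ h
    rw [hφapp, hφapp] at h
    have h1 := congrArg Prod.fst h
    have h2 := congrArg Prod.snd h
    simp only at h1 h2
    have hz2 : z.2 = z'.2 := by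
      have h2' : sp * z.2 / sD = sp * z'.2 / sD := by linarith
      rw [div_left_inj' hsDpos.ne', mul_right_inj' hsppos.ne'] at h2'
      exact h2'
    have hz1 : z.1 = z'.1 := by
      rw [hz2] at h1
      field_simp at h1
      have h3 : (z.1 - z'.1) * sD = 0 := by linarith
      rcases mul_eq_zero.1 h3 with h | h
      · linarith
      · exact absurd h hsDpos.ne'
    exact Prod.ext hz1 hz2
  have hsurj : φ '' Set.univ = Set.univ := by
    apply Set.eq_univ_of_forall
    intro w
    refine ⟨⟨sp*(w.1+u1) + q*(w.2+u2)/sp, sD*(w.2+u2)/sp⟩, Set.mem_univ _, ?_⟩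
    rw [hφapp]
    have hsp0 : sp ≠ 0 := hsppos.ne'
    have hsD0 : sD ≠ 0 := hsDpos.ne'
    apply Prod.ext <;> simp only <;> field_simp <;> ring
  have hfun : ∀ z : ℝ × ℝ, |L.det| • G (Qw a11 a22 a12 y1 y2 (φ z))
      = (1/sD) * G (z.1^2+z.2^2+m) := by
    intro z
    rw [hdet, halg z, abs_of_pos (by positivity : (0:ℝ) < 1/sD), smul_eq_mul]
  obtain ⟨hint_rad, hval_rad⟩ := radial_integral G H m C hm hC hG hH hH0 hbound
  have hiff := integrableOn_image_iff_integrableOn_abs_det_fderiv_smul volume MeasurableSet.univ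
      hder hinj (fun x => G (Qw a11 a22 a12 y1 y2 x))
  have hval := integral_image_eq_integral_abs_det_fderiv_smul volume MeasurableSet.univ
      hder hinj (fun x => G (Qw a11 a22 a12 y1 y2 x))
  rw [hsurj] at hiff hval
  constructor
  · rw [← integrableOn_univ, hiff, integrableOn_univ]
    have : (fun x : ℝ × ℝ => |L.det| • (fun x => G (Qw a11 a22 a12 y1 y2 x)) (φ x))
        = fun z : ℝ × ℝ => (1/sD) * G (z.1^2+z.2^2+m) := funext hfun
    rw [this]
    exact hint_rad.const_mul _
  · rw [setIntegral_univ, setIntegral_univ] at hval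
    rw [hval]
    have : (fun x : ℝ × ℝ => |L.det| • (fun x => G (Qw a11 a22 a12 y1 y2 x)) (φ x))
        = fun z : ℝ × ℝ => (1/sD) * G (z.1^2+z.2^2+m) := funext hfun
    rw [this, MeasureTheory.integral_const_mul, hval_rad]
    ring

set_option maxHeartbeats 4000000 in
lemma statement16_aux (a11 a22 : ℝ) (a12 : ℂ) (ha11 : 0 < a11) (ha22 : 0 < a22)
    (hA : 0 < a11 * a22 - Complex.normSq a12) (y1 y2 μ : ℝ) (hy : ¬(y1 = 0 ∧ y2 = 0)) :
    Integrable (fun x : ℝ × ℝ =>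
        μ / (Qw a11 a22 a12 y1 y2 x *
          (Qw a11 a22 a12 y1 y2 x + (a11 * a22 - Complex.normSq a12) * μ ^ 2) ^ ((3:ℝ)/2))
        + 2 * μ / (Qw a11 a22 a12 y1 y2 x ^ 2 *
          (Qw a11 a22 a12 y1 y2 x + (a11 * a22 - Complex.normSq a12) * μ ^ 2) ^ ((1:ℝ)/2))
        - 2 / (Real.sqrt (a11 * a22 - Complex.normSq a12) * Qw a11 a22 a12 y1 y2 x ^ 2)) ∧
      (∫ x : ℝ × ℝ,
        (μ / (Qw a11 a22 a12 y1 y2 x *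
          (Qw a11 a22 a12 y1 y2 x + (a11 * a22 - Complex.normSq a12) * μ ^ 2) ^ ((3:ℝ)/2))
        + 2 * μ / (Qw a11 a22 a12 y1 y2 x ^ 2 *
          (Qw a11 a22 a12 y1 y2 x + (a11 * a22 - Complex.normSq a12) * μ ^ 2) ^ ((1:ℝ)/2))
        - 2 / (Real.sqrt (a11 * a22 - Complex.normSq a12) * Qw a11 a22 a12 y1 y2 x ^ 2)))
        = -(2 * Real.pi) / (Real.sqrt (a11 * a22 - Complex.normSq a12) *
            Real.sqrt (a11 * a22 - Complex.normSq a12 + a12.im ^ 2) *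
            rhoH a11 a22 a12 y1 y2 μ *
            (rhoH a11 a22 a12 y1 y2 μ + Real.sqrt (a11 * a22 - Complex.normSq a12) * μ)) := by
  have hns : Complex.normSq a12 = a12.re ^ 2 + a12.im ^ 2 := by
    rw [Complex.normSq_apply]; ring
  set A := a11 * a22 - Complex.normSq a12 with hAdef
  set c := A * μ ^ 2 with hcdef
  set sA := Real.sqrt A with hsAdef
  have hsA : sA ^ 2 = A := Real.sq_sqrt hA.le
  have hsApos : 0 < sA := Real.sqrt_pos.2 hA
  have hc0 : 0 ≤ c := by rw [hcdef]; positivity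
  set D := A + a12.im ^ 2 with hDdef
  have hDpos : 0 < D := by rw [hDdef]; positivity
  set sD := Real.sqrt D with hsDdef
  have hsDpos : 0 < sD := Real.sqrt_pos.2 hDpos
  have hDq : 0 < a11 * a22 - a12.re ^ 2 := by
    rw [hAdef] at hA; nlinarith [sq_nonneg a12.im]
  have hQRy : 0 < QR a11 a22 a12 y1 y2 := by
    by_cases hy2 : y2 = 0
    · have hy1 : y1 ≠ 0 := fun h => hy ⟨h, hy2⟩
      simp only [QR, hy2]
      have : (0:ℝ) < a11 * y1 ^ 2 := by positivity
      nlinarith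
    · have hy2sq : 0 < y2 ^ 2 := by positivity
      have h1 : 0 < a11 * QR a11 a22 a12 y1 y2 := by
        simp only [QR]
        nlinarith [sq_nonneg (a11 * y1 + a12.re * y2), mul_pos hDq hy2sq]
      by_contra h
      push_neg at h
      nlinarith [mul_nonneg ha11.le (neg_nonneg.2 h)]
  set m := A * QR a11 a22 a12 y1 y2 / D with hmdef
  have hm : 0 < m := by rw [hmdef]; exact div_pos (mul_pos hA hQRy) hDpos
  set G := fun s : ℝ => μ / (s * (s + c) ^ ((3:ℝ)/2))
    + 2 * μ / (s ^ 2 * (s + c) ^ ((1:ℝ)/2)) - 2 / (sA * s ^ 2) with hGdef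
  set H := fun s : ℝ => -2 * μ / (s * (s + c) ^ ((1:ℝ)/2)) + 2 / (sA * s) with hHdef
  -- continuity of G
  have hGcont : ContinuousOn G (Set.Ici m) := by
    rw [hGdef]
    have hne : ∀ s ∈ Set.Ici m, 0 < s := fun s hs => lt_of_lt_of_le hm hs
    apply ContinuousOn.sub
    · apply ContinuousOn.add
      · apply ContinuousOn.div continuousOn_const
        · exact continuousOn_id.mul ((continuousOn_id.add continuousOn_const).rpow_const
            (fun x _ => Or.inr (by norm_num)))
        · intro x hx
          have hx0 := hne x hx
          have hxc : 0 < x + c := by linarith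
          have : 0 < x * (x + c) ^ ((3:ℝ)/2) := by positivity
          exact this.ne'
      · apply ContinuousOn.div continuousOn_const
        · exact (continuousOn_id.pow 2).mul ((continuousOn_id.add continuousOn_const).rpow_const
            (fun x _ => Or.inr (by norm_num)))
        · intro x hx
          have hx0 := hne x hx
          have hxc : 0 < x + c := by linarith
          have : 0 < x ^ 2 * (x + c) ^ ((1:ℝ)/2) := by positivity
          exact this.ne'
    · apply ContinuousOn.div continuousOn_const
      · exact continuousOn_const.mul (continuousOn_id.pow 2)
      · intro x hx
        have hx0 := hne x hx
        have : 0 < sA * x ^ 2 := by positivity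
        exact this.ne'
  -- derivative
  have hHd : ∀ s ∈ Set.Ici m, HasDerivAt H (G s) s := by
    intro s hs
    have hs0 : 0 < s := lt_of_lt_of_le hm hs
    have hsc : 0 < s + c := by linarith
    have hwpos : 0 < (s + c) ^ ((1:ℝ)/2) := Real.rpow_pos_of_pos hsc _
    have hd1 : HasDerivAt (fun x : ℝ => (x + c) ^ ((1:ℝ)/2))
        (1 * ((1:ℝ)/2) * (s + c) ^ ((1:ℝ)/2 - 1)) s := by
      have := HasDerivAt.rpow_const (p := (1:ℝ)/2) ((hasDerivAt_id s).add_const c)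
        (Or.inl hsc.ne')
      simpa using this
    have hden1 : HasDerivAt (fun x : ℝ => x * (x + c) ^ ((1:ℝ)/2))
        (1 * (s + c) ^ ((1:ℝ)/2) + s * (1 * ((1:ℝ)/2) * (s + c) ^ ((1:ℝ)/2 - 1))) s :=
      (hasDerivAt_id s).mul hd1
    have hq1 : HasDerivAt (fun x : ℝ => -2 * μ / (x * (x + c) ^ ((1:ℝ)/2)))
        ((0 * (s * (s + c) ^ ((1:ℝ)/2)) - (-2 * μ) *
          (1 * (s + c) ^ ((1:ℝ)/2) + s * (1 * ((1:ℝ)/2) * (s + c) ^ ((1:ℝ)/2 - 1))))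
          / (s * (s + c) ^ ((1:ℝ)/2)) ^ 2) s :=
      (hasDerivAt_const s (-2 * μ)).div hden1 (by positivity)
    have hq2 : HasDerivAt (fun x : ℝ => 2 / (sA * x))
        ((0 * (sA * s) - 2 * (sA * 1)) / (sA * s) ^ 2) s :=
      (hasDerivAt_const s (2:ℝ)).div ((hasDerivAt_id s).const_mul sA) (by positivity)
    have hsum := hq1.add hq2
    rw [hHdef]
    refine hsum.congr_deriv ?_
    symm
    rw [hGdef]
    simp only
    set w := (s + c) ^ ((1:ℝ)/2) with hw
    have hw2 : w ^ 2 = s + c := by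
      rw [hw, ← Real.rpow_natCast ((s + c) ^ ((1:ℝ)/2)) 2, ← Real.rpow_mul hsc.le]
      norm_num
    have hm1 : (s + c) ^ ((1:ℝ)/2 - 1) = w⁻¹ := by
      rw [show (1:ℝ)/2 - 1 = -(1/2) by norm_num, Real.rpow_neg hsc.le, hw]
    have hm3 : (s + c) ^ ((3:ℝ)/2) = (s + c) * w := by
      rw [show (3:ℝ)/2 = 1 + 1/2 by norm_num, Real.rpow_add hsc, Real.rpow_one, hw]
    rw [hm3, hm1, ← hw2]
    have hwne : w ≠ 0 := by positivity
    field_simp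
    ring
  -- limit at infinity
  have hH0 : Filter.Tendsto H Filter.atTop (nhds 0) := by
    rw [hHdef]
    have h1 : Filter.Tendsto (fun s : ℝ => s * (s + c) ^ ((1:ℝ)/2)) Filter.atTop Filter.atTop := by
      apply Filter.Tendsto.atTop_mul_atTop₀ Filter.tendsto_id
      exact (tendsto_rpow_atTop (by norm_num : (0:ℝ) < 1/2)).comp
        (Filter.tendsto_atTop_add_const_right Filter.atTop c Filter.tendsto_id)
    have h2 : Filter.Tendsto (fun s : ℝ => sA * s) Filter.atTop Filter.atTop :=
      Filter.Tendsto.const_mul_atTop hsApos Filter.tendsto_id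
    have := (Filter.Tendsto.div_atTop (tendsto_const_nhds (x := -2 * μ)) h1).add
      (Filter.Tendsto.div_atTop (tendsto_const_nhds (x := (2:ℝ))) h2)
    simpa using this
  -- bound
  have hbound : ∀ s ∈ Set.Ici m, |G s| ≤ (5 / sA) / s ^ 2 := by
    intro s hs
    have hs0 : 0 < s := lt_of_lt_of_le hm hs
    have hsc : 0 < s + c := by linarith
    set w := (s + c) ^ ((1:ℝ)/2) with hw
    have hwpos : 0 < w := Real.rpow_pos_of_pos hsc _
    have hw2 : w ^ 2 = s + c := by
      rw [hw, ← Real.rpow_natCast ((s + c) ^ ((1:ℝ)/2)) 2, ← Real.rpow_mul hsc.le]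
      norm_num
    have hμw : sA * |μ| ≤ w := by
      have h1 : (sA * |μ|) ^ 2 ≤ w ^ 2 := by
        rw [hw2, mul_pow, hsA, sq_abs]
        rw [hcdef] at *
        linarith
      have h2 := Real.sqrt_le_sqrt h1
      rwa [Real.sqrt_sq (by positivity), Real.sqrt_sq hwpos.le] at h2
    have hm3 : (s + c) ^ ((3:ℝ)/2) = (s + c) * w := by
      rw [show (3:ℝ)/2 = 1 + 1/2 by norm_num, Real.rpow_add hsc, Real.rpow_one, hw]
    have hb1 : |μ / (s * ((s + c) * w))| ≤ 1 / (sA * s ^ 2) := by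
      rw [abs_div, abs_of_pos (by positivity : (0:ℝ) < s * ((s + c) * w)),
        div_le_div_iff₀ (by positivity) (by positivity)]
      nlinarith [mul_le_mul_of_nonneg_right hμw (sq_nonneg s),
        mul_nonneg (mul_nonneg hwpos.le hs0.le) hc0]
    have hb2 : |2 * μ / (s ^ 2 * w)| ≤ 2 / (sA * s ^ 2) := by
      rw [abs_div, abs_of_pos (by positivity : (0:ℝ) < s ^ 2 * w),
        div_le_div_iff₀ (by positivity) (by positivity), abs_mul, abs_two]
      nlinarith [mul_le_mul_of_nonneg_right hμw (sq_nonneg s)]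
    have hb3 : |2 / (sA * s ^ 2)| = 2 / (sA * s ^ 2) :=
      abs_of_pos (by positivity)
    rw [hGdef]
    simp only
    rw [hm3, ← hw]
    have habs : |μ / (s * ((s + c) * w)) + 2 * μ / (s ^ 2 * w) - 2 / (sA * s ^ 2)|
        ≤ |μ / (s * ((s + c) * w))| + |2 * μ / (s ^ 2 * w)| + |2 / (sA * s ^ 2)| := by
      calc |μ / (s * ((s + c) * w)) + 2 * μ / (s ^ 2 * w) - 2 / (sA * s ^ 2)|
          ≤ |μ / (s * ((s + c) * w)) + 2 * μ / (s ^ 2 * w)| + |2 / (sA * s ^ 2)| :=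
            abs_sub _ _
        _ ≤ _ := by gcongr; exact abs_add_le _ _
    have : (5 / sA) / s ^ 2 = 1 / (sA * s ^ 2) + 2 / (sA * s ^ 2) + 2 / (sA * s ^ 2) := by
      field_simp; ring
    rw [this]
    rw [hb3] at habs
    linarith [habs, hb1, hb2]
  have hC5 : (0:ℝ) ≤ 5 / sA := by positivity
  obtain ⟨hint, hval⟩ := master a11 a22 a12 ha11 ha22 hA y1 y2 hy G H (5 / sA) hC5 m
    hmdef hGcont hHd hH0 hbound
  -- rho facts
  have hϱarg : A / D * QR a11 a22 a12 y1 y2 + A * μ ^ 2 = m + c := by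
    rw [hmdef, hcdef]; ring
  have hrho : rhoH a11 a22 a12 y1 y2 μ = Real.sqrt (m + c) := by
    unfold rhoH
    rw [← hAdef, ← hDdef, hϱarg]
  set ϱ := rhoH a11 a22 a12 y1 y2 μ with hϱdef
  have hϱpos : 0 < ϱ := by
    rw [hrho]
    exact Real.sqrt_pos.2 (by positivity)
  have hϱ2 : ϱ ^ 2 = m + c := by
    rw [hrho, Real.sq_sqrt (by positivity)]
  have hgt : sA * |μ| < ϱ := by
    have h1 : (sA * |μ|) ^ 2 < ϱ ^ 2 := by
      rw [hϱ2, mul_pow, hsA, sq_abs, hcdef]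
      linarith
    have h2 := Real.sqrt_lt_sqrt (sq_nonneg _) h1
    rwa [Real.sqrt_sq (by positivity), Real.sqrt_sq hϱpos.le] at h2
  have hplus : 0 < ϱ + sA * μ := by
    have := mul_le_mul_of_nonneg_left (neg_abs_le μ) hsApos.le
    nlinarith [hgt]
  have hminus : 0 < ϱ - sA * μ := by
    have := mul_le_mul_of_nonneg_left (le_abs_self μ) hsApos.le
    nlinarith [hgt]
  constructor
  · exact hint
  · rw [hval]
    have hwm : (m + c) ^ ((1:ℝ)/2) = ϱ := by
      rw [hrho, Real.sqrt_eq_rpow]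
    have hHm : H m = -2 * μ / (m * ϱ) + 2 / (sA * m) := by
      rw [hHdef]
      simp only
      rw [hwm]
    rw [hHm]
    have hm2 : m = ϱ ^ 2 - sA ^ 2 * μ ^ 2 := by
      rw [hϱ2, hcdef, hsA]; ring
    rw [hm2]
    have h1 : ϱ ^ 2 - sA ^ 2 * μ ^ 2 ≠ 0 := by nlinarith [mul_pos hplus hminus]
    have h2 : ϱ + sA * μ ≠ 0 := hplus.ne'
    rw [show √(a11 * a22 - Complex.normSq a12 + a12.im ^ 2) = sD from rfl]
    field_simp
    have h1' : -(μ ^ 2 * sA ^ 2) + ϱ ^ 2 ≠ 0 := fun h => h1 (by linarith)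
    have h2' : μ * sA + ϱ ≠ 0 := fun h => h2 (by linarith)
    rw [neg_inj, div_eq_div_iff (fun h => h1 (by linarith)) (fun h => h2 (by linarith))]
    ring

/-- the closed forms of the integrals `I_{p3}`, `I_{p4}`:
`∫ [μ/(Q_w(Q_w+Aμ²)^{3/2}) + 2μ/(Q_w²(Q_w+Aμ²)^{1/2}) ∓ 2/(√A·Q_w²)] dx
  = ∓2π/(√A√𝔸·ϱ·(ϱ ± √A·μ))`. -/
theorem statement16 (a11 a22 : ℝ) (a12 : ℂ) (ha11 : 0 < a11) (ha22 : 0 < a22)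
    (hA : 0 < a11 * a22 - Complex.normSq a12) (y1 y2 μ : ℝ) (hy : ¬(y1 = 0 ∧ y2 = 0)) :
    (Integrable (fun x : ℝ × ℝ =>
        μ / (Qw a11 a22 a12 y1 y2 x *
          (Qw a11 a22 a12 y1 y2 x + (a11 * a22 - Complex.normSq a12) * μ ^ 2) ^ ((3:ℝ)/2))
        + 2 * μ / (Qw a11 a22 a12 y1 y2 x ^ 2 *
          (Qw a11 a22 a12 y1 y2 x + (a11 * a22 - Complex.normSq a12) * μ ^ 2) ^ ((1:ℝ)/2))
        - 2 / (Real.sqrt (a11 * a22 - Complex.normSq a12) * Qw a11 a22 a12 y1 y2 x ^ 2)) ∧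
      (∫ x : ℝ × ℝ,
        (μ / (Qw a11 a22 a12 y1 y2 x *
          (Qw a11 a22 a12 y1 y2 x + (a11 * a22 - Complex.normSq a12) * μ ^ 2) ^ ((3:ℝ)/2))
        + 2 * μ / (Qw a11 a22 a12 y1 y2 x ^ 2 *
          (Qw a11 a22 a12 y1 y2 x + (a11 * a22 - Complex.normSq a12) * μ ^ 2) ^ ((1:ℝ)/2))
        - 2 / (Real.sqrt (a11 * a22 - Complex.normSq a12) * Qw a11 a22 a12 y1 y2 x ^ 2)))
        = -(2 * Real.pi) / (Real.sqrt (a11 * a22 - Complex.normSq a12) *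
            Real.sqrt (a11 * a22 - Complex.normSq a12 + a12.im ^ 2) *
            rhoH a11 a22 a12 y1 y2 μ *
            (rhoH a11 a22 a12 y1 y2 μ + Real.sqrt (a11 * a22 - Complex.normSq a12) * μ))) ∧
    (Integrable (fun x : ℝ × ℝ =>
        μ / (Qw a11 a22 a12 y1 y2 x *
          (Qw a11 a22 a12 y1 y2 x + (a11 * a22 - Complex.normSq a12) * μ ^ 2) ^ ((3:ℝ)/2))
        + 2 * μ / (Qw a11 a22 a12 y1 y2 x ^ 2 *
          (Qw a11 a22 a12 y1 y2 x + (a11 * a22 - Complex.normSq a12) * μ ^ 2) ^ ((1:ℝ)/2))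
        + 2 / (Real.sqrt (a11 * a22 - Complex.normSq a12) * Qw a11 a22 a12 y1 y2 x ^ 2)) ∧
      (∫ x : ℝ × ℝ,
        (μ / (Qw a11 a22 a12 y1 y2 x *
          (Qw a11 a22 a12 y1 y2 x + (a11 * a22 - Complex.normSq a12) * μ ^ 2) ^ ((3:ℝ)/2))
        + 2 * μ / (Qw a11 a22 a12 y1 y2 x ^ 2 *
          (Qw a11 a22 a12 y1 y2 x + (a11 * a22 - Complex.normSq a12) * μ ^ 2) ^ ((1:ℝ)/2))
        + 2 / (Real.sqrt (a11 * a22 - Complex.normSq a12) * Qw a11 a22 a12 y1 y2 x ^ 2)))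
        = 2 * Real.pi / (Real.sqrt (a11 * a22 - Complex.normSq a12) *
            Real.sqrt (a11 * a22 - Complex.normSq a12 + a12.im ^ 2) *
            rhoH a11 a22 a12 y1 y2 μ *
            (rhoH a11 a22 a12 y1 y2 μ - Real.sqrt (a11 * a22 - Complex.normSq a12) * μ))) := by
  obtain ⟨hi1, hv1⟩ := statement16_aux a11 a22 a12 ha11 ha22 hA y1 y2 μ hy
  refine ⟨⟨hi1, hv1⟩, ?_⟩
  obtain ⟨hi2, hv2⟩ := statement16_aux a11 a22 a12 ha11 ha22 hA y1 y2 (-μ) hy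
  have hfe : (fun x : ℝ × ℝ =>
        μ / (Qw a11 a22 a12 y1 y2 x *
          (Qw a11 a22 a12 y1 y2 x + (a11 * a22 - Complex.normSq a12) * μ ^ 2) ^ ((3:ℝ)/2))
        + 2 * μ / (Qw a11 a22 a12 y1 y2 x ^ 2 *
          (Qw a11 a22 a12 y1 y2 x + (a11 * a22 - Complex.normSq a12) * μ ^ 2) ^ ((1:ℝ)/2))
        + 2 / (Real.sqrt (a11 * a22 - Complex.normSq a12) * Qw a11 a22 a12 y1 y2 x ^ 2))
      = fun x : ℝ × ℝ => -(
        (-μ) / (Qw a11 a22 a12 y1 y2 x *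
          (Qw a11 a22 a12 y1 y2 x + (a11 * a22 - Complex.normSq a12) * (-μ) ^ 2) ^ ((3:ℝ)/2))
        + 2 * (-μ) / (Qw a11 a22 a12 y1 y2 x ^ 2 *
          (Qw a11 a22 a12 y1 y2 x + (a11 * a22 - Complex.normSq a12) * (-μ) ^ 2) ^ ((1:ℝ)/2))
        - 2 / (Real.sqrt (a11 * a22 - Complex.normSq a12) * Qw a11 a22 a12 y1 y2 x ^ 2)) := by
    funext x
    simp only [neg_sq]
    ring
  have hϱeq : rhoH a11 a22 a12 y1 y2 (-μ) = rhoH a11 a22 a12 y1 y2 μ := by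
    unfold rhoH
    rw [neg_sq]
  constructor
  · rw [hfe]
    exact hi2.neg
  · rw [hfe, integral_neg, hv2, hϱeq]
    ring
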